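/- Let X = E + U - max(U) with E ~ Exp(1) independent of U = (U1, ..., Ud), where X_j = E + U_j - max(U1,...,Ud). Assume each U_j is integrable. Then the causal score s_{i→j} is strictly positive if and only if E[U_i] < E[U_j], provided max_k W1(X_k, E) > 0. -/
import Mathlib


open MeasureTheory ProbabilityTheory
open scoped ENNReal

/-- The 1-Wasserstein distance between the CDFs of two real random variables. -/
noncomputable def W1 {Ω : Type*} [MeasurableSpace Ω] (μ : Measure Ω) (A B : Ω → ℝ) : ℝ :=
  ∫ t : ℝ, |(μ {ω | A ω ≤ t}).toReal - (μ {ω | B ω ≤ t}).toReal|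

lemma W1_eq_integral_sub {Ω : Type*} [MeasurableSpace Ω] (μ : Measure Ω)
    [IsProbabilityMeasure μ] {X E : Ω → ℝ} (hX : Measurable X) (hE : Measurable E)
    (hle : ∀ ω, X ω ≤ E ω) (hint : Integrable (fun ω => E ω - X ω) μ) :
    W1 μ X E = ∫ ω, (E ω - X ω) ∂μ := by
  have hA : MeasurableSet {p : ℝ × Ω | X p.2 ≤ p.1 ∧ p.1 < E p.2} := by
    exact (measurableSet_le (hX.comp measurable_snd) measurable_fst).inter
      (measurableSet_lt measurable_fst (hE.comp measurable_snd))
  set A := {p : ℝ × Ω | X p.2 ≤ p.1 ∧ p.1 < E p.2} with hAdef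
  have hpre : ∀ t : ℝ, Prod.mk t ⁻¹' A = {ω | X ω ≤ t ∧ t < E ω} := fun t => rfl
  have hmeas : Measurable fun t => μ (Prod.mk t ⁻¹' A) :=
    measurable_measure_prodMk_left hA
  have key : ∀ t : ℝ, |(μ {ω | X ω ≤ t}).toReal - (μ {ω | E ω ≤ t}).toReal|
      = (μ (Prod.mk t ⁻¹' A)).toReal := by
    intro t
    have hset : {ω | X ω ≤ t} = {ω | E ω ≤ t} ∪ {ω | X ω ≤ t ∧ t < E ω} := by
      ext ω
      simp only [Set.mem_setOf_eq, Set.mem_union]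
      constructor
      · intro h
        rcases le_or_gt (E ω) t with h' | h'
        · exact Or.inl h'
        · exact Or.inr ⟨h, h'⟩
      · rintro (h | ⟨h, _⟩)
        · exact (hle ω).trans h
        · exact h
    have hdisj : Disjoint {ω | E ω ≤ t} {ω | X ω ≤ t ∧ t < E ω} := by
      rw [Set.disjoint_left]
      rintro ω h ⟨_, h'⟩
      exact absurd h (not_le.mpr h')
    have hm2 : MeasurableSet {ω | X ω ≤ t ∧ t < E ω} :=
      (measurableSet_le hX measurable_const).inter
        (measurableSet_lt measurable_const hE)
    have := measure_union (μ := μ) hdisj hm2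
    rw [hpre, hset, this, ENNReal.toReal_add (measure_ne_top μ _) (measure_ne_top μ _)]
    rw [abs_of_nonneg (by simp [ENNReal.toReal_nonneg])]
    ring
  have hW1 : W1 μ X E = ∫ t : ℝ, (μ (Prod.mk t ⁻¹' A)).toReal := by
    unfold W1
    exact integral_congr_ae (Filter.Eventually.of_forall key)
  rw [hW1]
  have hfin : ∀ᵐ t : ℝ, μ (Prod.mk t ⁻¹' A) < ⊤ :=
    Filter.Eventually.of_forall fun t => measure_lt_top μ _
  rw [integral_toReal hmeas.aemeasurable hfin]
  have hTon : ∫⁻ t : ℝ, μ (Prod.mk t ⁻¹' A) = ∫⁻ ω, ENNReal.ofReal (E ω - X ω) ∂μ := by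
    have h1 : ∀ t : ℝ, μ (Prod.mk t ⁻¹' A)
        = ∫⁻ ω, A.indicator (fun _ => (1 : ℝ≥0∞)) (t, ω) ∂μ := by
      intro t
      exact (lintegral_indicator_one (measurable_prodMk_left hA)).symm
    simp_rw [h1]
    rw [lintegral_lintegral_swap
      (f := fun t ω => A.indicator (fun _ => (1 : ℝ≥0∞)) (t, ω))
      (by exact (measurable_one.indicator hA).aemeasurable)]
    congr 1
    funext ω
    have h2 : (fun t : ℝ => A.indicator (fun _ => (1 : ℝ≥0∞)) (t, ω))
        = (Set.Ico (X ω) (E ω)).indicator (fun _ => (1 : ℝ≥0∞)) := by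
      funext t
      by_cases h : (t, ω) ∈ A
      · rw [Set.indicator_of_mem h, Set.indicator_of_mem (by exact h)]
      · rw [Set.indicator_of_notMem h, Set.indicator_of_notMem (by exact h)]
    rw [h2]
    have h3 : lintegral (volume : Measure ℝ)
        ((Set.Ico (X ω) (E ω)).indicator fun _ => (1 : ℝ≥0∞))
        = volume (Set.Ico (X ω) (E ω)) := lintegral_indicator_one measurableSet_Ico
    rw [h3, Real.volume_Ico]
  rw [hTon]
  rw [integral_eq_lintegral_of_nonneg_ae
    (Filter.Eventually.of_forall fun ω => sub_nonneg.mpr (hle ω))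
    ((hE.sub hX).aestronglyMeasurable)]

/-- For the standard Pareto construction `X_j = E + U_j - max U`, the causal score
`s_{i→j}` is strictly positive iff `E[Uᵢ] < E[Uⱼ]`, provided the denominator is positive. -/
theorem causalScore_pos_iff_mean_lt
    {Ω : Type*} [MeasurableSpace Ω] (μ : Measure Ω) [IsProbabilityMeasure μ]
    {d : ℕ} (hd : (Finset.univ : Finset (Fin d)).Nonempty)
    (E : Ω → ℝ) (U : Fin d → Ω → ℝ) (maxU : Ω → ℝ) (X : Fin d → Ω → ℝ)
    (hE : Measurable E) (hU : ∀ k, Measurable (U k))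
    (hexp : ∀ t : ℝ, 0 ≤ t → μ {ω | t < E ω} = ENNReal.ofReal (Real.exp (-t)))
    (hindep : IndepFun E (fun ω => (fun k => U k ω)) μ)
    (hmaxU : ∀ ω, maxU ω = Finset.univ.sup' hd (fun k => U k ω))
    (hX : ∀ k ω, X k ω = E ω + U k ω - maxU ω)
    (hUint : ∀ k, Integrable (U k) μ) (hmaxUint : Integrable maxU μ)
    (i j : Fin d)
    (hpos : 0 < Finset.univ.sup' hd (fun k => W1 μ (X k) E)) :
    0 < (W1 μ (X i) E - W1 μ (X j) E) / Finset.univ.sup' hd (fun k => W1 μ (X k) E)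
      ↔ (∫ ω, U i ω ∂μ) < ∫ ω, U j ω ∂μ := by
  have hmaxU_meas : Measurable maxU := by
    have h : maxU = Finset.univ.sup' hd U := by
      funext ω
      rw [hmaxU ω, Finset.sup'_apply]
    rw [h]
    exact Finset.measurable_sup' hd (fun k _ => hU k)
  have hW1 : ∀ k, W1 μ (X k) E = (∫ ω, maxU ω ∂μ) - ∫ ω, U k ω ∂μ := by
    intro k
    have hXk : Measurable (X k) := by
      have h : X k = fun ω => E ω + U k ω - maxU ω := funext (hX k)
      rw [h]
      exact (hE.add (hU k)).sub hmaxU_meas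
    have hle : ∀ ω, X k ω ≤ E ω := by
      intro ω
      have := Finset.le_sup' (fun m => U m ω) (Finset.mem_univ k)
      rw [hX k ω, ← hmaxU ω] at *
      linarith
    have hsub : (fun ω => E ω - X k ω) = fun ω => maxU ω - U k ω := by
      funext ω
      rw [hX k ω]; ring
    have hint : Integrable (fun ω => E ω - X k ω) μ := by
      rw [hsub]; exact hmaxUint.sub (hUint k)
    rw [W1_eq_integral_sub μ hXk hE hle hint]
    simp_rw [hsub]
    exact integral_sub hmaxUint (hUint k)
  rw [hW1 i, hW1 j, div_pos_iff]
  constructor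
  · rintro (⟨h, _⟩ | ⟨_, h⟩)
    · linarith
    · linarith
  · intro h
    exact Or.inl ⟨by linarith, hpos⟩
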